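/- Let p be a prime and C ⊂ ℚ_p a finite set with ∑_{c∈C} χ(c) = 0, where χ(x) = e^{2πi{x}} is the standard additive character of ℚ_p ({x} denotes the p-adic fractional part). Then p divides Card(C), and for every x ∈ ℤ_p^× one also has ∑_{c∈C} χ(x c) = 0. -/

import Mathlib

open Complex Polynomial

/-- The standard additive character `χ(x) = e^{2πi {x}}` of `ℚ_[p]`, where `{x}` is the
p-adic fractional part of `x`. -/
noncomputable def stdChar (p : ℕ) [hp : Fact p.Prime] (x : ℚ_[p]) : ℂ :=
  let n : ℕ := (-x.valuation).toNat
  let y : ℤ_[p] := ⟨(p : ℚ_[p]) ^ n * x, by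
    by_cases hx : x = 0
    · simp [hx]
    · rw [Padic.padicNormE.mul, norm_pow, Padic.norm_p, Padic.norm_eq_zpow_neg_valuation hx]
      have h1 : (1:ℝ) < p := by exact_mod_cast hp.out.one_lt
      have h0 : (0:ℝ) < p := by positivity
      rw [inv_pow, ← zpow_natCast, ← zpow_neg, ← zpow_add₀ (ne_of_gt h0)]
      apply zpow_le_one_of_nonpos₀ h1.le
      have h2 : -x.valuation ≤ ((-x.valuation).toNat : ℤ) := Int.self_le_toNat _
      omega⟩
  Complex.exp (2 * Real.pi * Complex.I * ((y.appr n : ℂ) / (p : ℂ) ^ n))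

section aux

variable (p : ℕ) [hp : Fact p.Prime]

lemma aux_exp_frac_eq (x : ℚ_[p]) (a b : ℤ) (n m : ℕ)
    (ha : ‖x - (a : ℚ_[p]) / (p:ℚ_[p])^n‖ ≤ 1) (hb : ‖x - (b:ℚ_[p]) / (p:ℚ_[p])^m‖ ≤ 1) :
    Complex.exp (2*Real.pi*Complex.I * ((a:ℂ) / (p:ℂ)^n)) =
      Complex.exp (2*Real.pi*Complex.I * ((b:ℂ) / (p:ℂ)^m)) := by
  have hp0 : (p:ℚ_[p]) ≠ 0 := Nat.cast_ne_zero.mpr hp.out.ne_zero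
  have hkval : ((a * (p:ℤ)^m - b * (p:ℤ)^n : ℤ) : ℚ_[p]) = (p:ℚ_[p])^(n+m) *
      (((a : ℚ_[p]) / (p:ℚ_[p])^n - x) + (x - (b:ℚ_[p]) / (p:ℚ_[p])^m)) := by
    push_cast
    field_simp
    ring
  have hknorm : ‖((a * (p:ℤ)^m - b * (p:ℤ)^n : ℤ) : ℚ_[p])‖ ≤ (p:ℝ) ^ (-(n+m : ℕ) : ℤ) := by
    rw [hkval, Padic.padicNormE.mul, Padic.norm_p_pow]
    have h1 : ‖((a : ℚ_[p]) / (p:ℚ_[p])^n - x) + (x - (b:ℚ_[p]) / (p:ℚ_[p])^m)‖ ≤ 1 := by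
      refine le_trans (Padic.nonarchimedean _ _) (max_le ?_ hb)
      rwa [norm_sub_rev] at ha
    calc (p:ℝ) ^ (-(n+m : ℕ) : ℤ) * ‖_‖ ≤ (p:ℝ) ^ (-(n+m : ℕ) : ℤ) * 1 := by
          apply mul_le_mul_of_nonneg_left h1
          positivity
      _ = (p:ℝ) ^ (-(n+m : ℕ) : ℤ) := mul_one _
  obtain ⟨t, ht⟩ := (Padic.norm_int_le_pow_iff_dvd _ (n+m)).mp hknorm
  have hpc : (p:ℂ) ≠ 0 := Nat.cast_ne_zero.mpr hp.out.ne_zero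
  have hC : (a:ℂ) / (p:ℂ)^n = (b:ℂ) / (p:ℂ)^m + (t:ℂ) := by
    have h2 : (a:ℂ) * (p:ℂ)^m - (b:ℂ) * (p:ℂ)^n = (p:ℂ)^(n+m) * t := by
      have h3 := congrArg (fun z : ℤ => (z : ℂ)) ht
      push_cast at h3
      linear_combination h3
    field_simp
    rw [pow_add] at h2
    linear_combination h2
  rw [hC, mul_add, Complex.exp_add]
  have h4 : Complex.exp (2*Real.pi*Complex.I * (t:ℂ)) = 1 := by
    have h5 := Complex.exp_int_mul_two_pi_mul_I t
    rw [← h5]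
    ring_nf
  rw [h4, mul_one]

lemma aux_stdChar_spec (x : ℚ_[p]) :
    ∃ (n a : ℕ), ‖x - (a:ℚ_[p]) / (p:ℚ_[p])^n‖ ≤ 1 ∧
      stdChar p x = Complex.exp (2*Real.pi*Complex.I * ((a:ℂ) / (p:ℂ)^n)) := by
  unfold stdChar
  set n : ℕ := (-x.valuation).toNat with hn
  set y : ℤ_[p] := ⟨(p : ℚ_[p]) ^ n * x, by
    by_cases hx : x = 0
    · simp [hx]
    · rw [Padic.padicNormE.mul, norm_pow, Padic.norm_p, Padic.norm_eq_zpow_neg_valuation hx]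
      have h1 : (1:ℝ) < p := by exact_mod_cast hp.out.one_lt
      have h0 : (0:ℝ) < p := by positivity
      rw [inv_pow, ← zpow_natCast, ← zpow_neg, ← zpow_add₀ (ne_of_gt h0)]
      apply zpow_le_one_of_nonpos₀ h1.le
      have h2 : -x.valuation ≤ ((-x.valuation).toNat : ℤ) := Int.self_le_toNat _
      omega⟩ with hy
  refine ⟨n, y.appr n, ?_, rfl⟩
  have hp0 : (p:ℚ_[p]) ≠ 0 := Nat.cast_ne_zero.mpr hp.out.ne_zero
  have hpow : ((p:ℚ_[p])^n) ≠ 0 := pow_ne_zero _ hp0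
  have hspec := PadicInt.appr_spec n y
  rw [Ideal.mem_span_singleton] at hspec
  obtain ⟨z, hz⟩ := hspec
  have hdiff : x - ((y.appr n : ℚ_[p]) / (p:ℚ_[p])^n)
      = ((y - (y.appr n) : ℤ_[p]) : ℚ_[p]) / (p:ℚ_[p])^n := by
    push_cast
    field_simp
    try ring
  rw [hdiff, hz]
  have hcan : (((p:ℤ_[p])^n * z : ℤ_[p]) : ℚ_[p]) / (p:ℚ_[p])^n = (z : ℚ_[p]) := by
    push_cast
    field_simp
  rw [hcan]
  exact z.2

lemma aux_stdChar_eq (x : ℚ_[p]) (a : ℤ) (n : ℕ)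
    (ha : ‖x - (a : ℚ_[p]) / (p:ℚ_[p])^n‖ ≤ 1) :
    stdChar p x = Complex.exp (2*Real.pi*Complex.I * ((a:ℂ) / (p:ℂ)^n)) := by
  obtain ⟨m, b, hb, hval⟩ := aux_stdChar_spec p x
  rw [hval]
  have hb' : ‖x - ((b:ℤ) : ℚ_[p]) / (p:ℚ_[p])^m‖ ≤ 1 := by push_cast; exact hb
  have := aux_exp_frac_eq p x (b:ℤ) a m n hb' ha
  push_cast at this ⊢
  exact this

lemma aux_key (N a n : ℕ) (hn : n ≤ N) :
    Complex.exp (2*Real.pi*Complex.I * ((a:ℂ) / (p:ℂ)^n)) =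
      Complex.exp (2*Real.pi*Complex.I / (p:ℂ)^N) ^ (a * p^(N-n)) := by
  have hpc : (p:ℂ) ≠ 0 := Nat.cast_ne_zero.mpr hp.out.ne_zero
  rw [← Complex.exp_nat_mul]
  congr 1
  have hmul : (p:ℂ)^(N-n) * (p:ℂ)^n = (p:ℂ)^N := by
    rw [← pow_add]; congr 1; omega
  push_cast
  field_simp
  rw [← hmul]
  ring

end aux

/-- If `C ⊂ ℚ_p` is a finite set with `∑_{c ∈ C} χ(c) = 0`, then `p` divides `Card C`
and `∑_{c ∈ C} χ(x c) = 0` for every p-adic unit `x`. -/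
theorem stmt3 (p : ℕ) [Fact p.Prime] (C : Finset ℚ_[p])
    (h : ∑ c ∈ C, stdChar p c = 0) :
    p ∣ C.card ∧ ∀ x : ℚ_[p], ‖x‖ = 1 → ∑ c ∈ C, stdChar p (x * c) = 0 := by
  classical
  have hp : Fact p.Prime := inferInstance
  have hpr : (0:ℝ) < p := by exact_mod_cast hp.out.pos
  choose nn aa hnorm hval using fun x => aux_stdChar_spec p x
  set N : ℕ := C.sup nn + 1 with hN
  have hNpos : 0 < p ^ N := pow_pos hp.out.pos _
  set ζ : ℂ := Complex.exp (2 * Real.pi * Complex.I / (p:ℂ)^N) with hζdef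
  have hζ : IsPrimitiveRoot ζ (p^N) := by
    have h1 := Complex.isPrimitiveRoot_exp (p^N) hNpos.ne'
    have h2 : ((p^N : ℕ) : ℂ) = (p:ℂ)^N := by push_cast; ring
    rwa [h2] at h1
  have hpc : (p:ℂ) ≠ 0 := Nat.cast_ne_zero.mpr hp.out.ne_zero
  set e : ℚ_[p] → ℕ := fun c => aa c * p^(N - nn c) with he
  have hnnle : ∀ c ∈ C, nn c ≤ N := fun c hc => le_trans (Finset.le_sup hc) (Nat.le_succ _)
  have hchar : ∀ c ∈ C, stdChar p c = ζ ^ e c := by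
    intro c hc
    rw [hval c, aux_key p N (aa c) (nn c) (hnnle c hc)]
  set f : Polynomial ℤ := ∑ c ∈ C, Polynomial.X ^ e c with hf
  have haev : ∀ w : ℂ, Polynomial.aeval w f = ∑ c ∈ C, w ^ e c := by
    intro w; rw [hf]; simp
  have hroot : Polynomial.aeval ζ f = 0 := by
    rw [haev, ← h]
    exact Finset.sum_congr rfl (fun c hc => (hchar c hc).symm)
  have hdvd : Polynomial.cyclotomic (p^N) ℤ ∣ f := by
    rw [Polynomial.cyclotomic_eq_minpoly hζ hNpos]
    exact minpoly.isIntegrallyClosed_dvd (hζ.isIntegral hNpos) hroot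
  obtain ⟨g, hg⟩ := hdvd
  constructor
  · have h1 : f.eval 1 = (C.card : ℤ) := by
      rw [hf]; simp [Polynomial.eval_finset_sum]
    have h2 : f.eval 1 = (p : ℤ) * g.eval 1 := by
      rw [hg, Polynomial.eval_mul, hN, Polynomial.eval_one_cyclotomic_prime_pow]
    have h3 : (p : ℤ) ∣ (C.card : ℤ) := ⟨g.eval 1, by rw [← h1, h2]⟩
    exact_mod_cast h3
  · intro x hx
    set z : ℤ_[p] := ⟨x, hx.le⟩ with hz
    set u : ℕ := z.appr N with hu
    have hspec := PadicInt.appr_spec N z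
    rw [Ideal.mem_span_singleton] at hspec
    obtain ⟨w, hw⟩ := hspec
    have huapp : ‖x - (u : ℚ_[p])‖ ≤ (p:ℝ) ^ (-N : ℤ) := by
      have h1 : x - (u : ℚ_[p]) = ((z - u : ℤ_[p]) : ℚ_[p]) := by
        rw [hz]; rfl
      rw [h1, hw]
      push_cast
      rw [Padic.padicNormE.mul, Padic.norm_p_pow]
      calc (p:ℝ) ^ (-N : ℤ) * ‖((w : ℤ_[p]) : ℚ_[p])‖ ≤ (p:ℝ) ^ (-N : ℤ) * 1 := by
            apply mul_le_mul_of_nonneg_left w.2; positivity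
        _ = (p:ℝ) ^ (-N : ℤ) := mul_one _
    have hplt : (p:ℝ) ^ (-N : ℤ) < 1 :=
      zpow_lt_one_of_neg₀ (by exact_mod_cast hp.out.one_lt) (by omega)
    have hult : ‖x - (u:ℚ_[p])‖ < 1 := lt_of_le_of_lt huapp hplt
    have hunorm : ‖((u:ℤ) : ℚ_[p])‖ = 1 := by
      push_cast
      have h3 : ‖-(x - (u:ℚ_[p]))‖ < 1 := by rwa [norm_neg]
      have h4 : ‖x‖ ≠ ‖-(x - (u:ℚ_[p]))‖ := by rw [hx]; exact h3.ne'
      rw [show (u:ℚ_[p]) = x + -(x - (u:ℚ_[p])) by ring,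
        Padic.add_eq_max_of_ne h4, hx]
      exact max_eq_left h3.le
    have hpu : ¬ (p:ℤ) ∣ (u:ℤ) := by
      intro hd
      have h5 := (Padic.norm_intCast_lt_one_iff (k := (u:ℤ))).mpr hd
      rw [hunorm] at h5; exact lt_irrefl _ h5
    have hcop : Nat.Coprime u (p^N) := by
      apply Nat.Coprime.pow_right
      rw [Nat.coprime_comm]
      rw [Nat.Prime.coprime_iff_not_dvd hp.out]
      intro hd; exact hpu (Int.natCast_dvd_natCast.mpr hd)
    have hη : IsPrimitiveRoot (ζ ^ u) (p^N) := hζ.pow_of_coprime u hcop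
    have hcharx : ∀ c ∈ C, stdChar p (x * c) = (ζ ^ u) ^ e c := by
      intro c hc
      have hb : ‖x * c - (((u * aa c : ℕ) : ℤ) : ℚ_[p]) / (p:ℚ_[p])^(nn c)‖ ≤ 1 := by
        have hpq0 : ((p:ℚ_[p])^(nn c)) ≠ 0 := pow_ne_zero _ (Nat.cast_ne_zero.mpr hp.out.ne_zero)
        have hsplit : x * c - (((u * aa c : ℕ) : ℤ) : ℚ_[p]) / (p:ℚ_[p])^(nn c)
            = (x - (u:ℚ_[p])) * c + (u:ℚ_[p]) * (c - (aa c : ℚ_[p]) / (p:ℚ_[p])^(nn c)) := by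
          push_cast; field_simp; ring
        rw [hsplit]
        refine le_trans (Padic.nonarchimedean _ _) (max_le ?_ ?_)
        · rw [Padic.padicNormE.mul]
          have hcnorm : ‖c‖ ≤ (p:ℝ) ^ (nn c : ℤ) := by
            have h1 : c = (c - (aa c : ℚ_[p]) / (p:ℚ_[p])^(nn c))
                + (aa c : ℚ_[p]) / (p:ℚ_[p])^(nn c) := by ring
            have h1' : ‖c‖ = ‖(c - (aa c : ℚ_[p]) / (p:ℚ_[p])^(nn c))
                + (aa c : ℚ_[p]) / (p:ℚ_[p])^(nn c)‖ := by rw [← h1]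
            rw [h1']
            refine le_trans (Padic.nonarchimedean _ _) (max_le ?_ ?_)
            · refine le_trans (hnorm c) ?_
              exact one_le_zpow₀ (by exact_mod_cast hp.out.one_lt.le) (by omega)
            · rw [norm_div, Padic.norm_p_pow]
              have haan : ‖((aa c : ℤ) : ℚ_[p])‖ ≤ 1 := Padic.norm_int_le_one _
              push_cast at haan
              rw [div_eq_mul_inv]
              calc ‖(aa c : ℚ_[p])‖ * ((p:ℝ)^(-(nn c):ℤ))⁻¹
                  ≤ 1 * ((p:ℝ)^(-(nn c):ℤ))⁻¹ :=
                    mul_le_mul_of_nonneg_right haan (by positivity)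
                _ = (p:ℝ)^((nn c):ℤ) := by rw [one_mul, ← zpow_neg, neg_neg]
          calc ‖x - (u:ℚ_[p])‖ * ‖c‖ ≤ (p:ℝ)^(-N:ℤ) * (p:ℝ)^((nn c):ℤ) :=
                mul_le_mul huapp hcnorm (norm_nonneg _) (by positivity)
            _ = (p:ℝ)^((nn c : ℤ) + -N) := by
                rw [← zpow_add₀ hpr.ne']; ring_nf
            _ ≤ 1 := by
                apply zpow_le_one_of_nonpos₀ (by exact_mod_cast hp.out.one_lt.le)
                have := hnnle c hc; omega
        · rw [Padic.padicNormE.mul]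
          have h1 : ‖((u:ℤ) : ℚ_[p])‖ ≤ 1 := Padic.norm_int_le_one _
          push_cast at h1
          have h2 : ‖c - (aa c : ℚ_[p]) / (p:ℚ_[p])^(nn c)‖ ≤ 1 := hnorm c
          calc ‖(u:ℚ_[p])‖ * ‖c - (aa c : ℚ_[p]) / (p:ℚ_[p])^(nn c)‖ ≤ 1 * 1 :=
                mul_le_mul h1 h2 (norm_nonneg _) zero_le_one
            _ = 1 := mul_one 1
      have h7 := aux_stdChar_eq p (x * c) ((u * aa c : ℕ) : ℤ) (nn c) hb
      rw [h7]
      have h8 : (((u * aa c : ℕ) : ℤ) : ℂ) = ((u * aa c : ℕ) : ℂ) := by push_cast; ring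
      rw [h8, aux_key p N (u * aa c) (nn c) (hnnle c hc), ← hζdef, ← pow_mul]
      congr 1
      simp only [he]
      ring
    have hsum : ∑ c ∈ C, stdChar p (x * c) = Polynomial.aeval (ζ ^ u) f := by
      rw [haev]
      exact Finset.sum_congr rfl hcharx
    rw [hsum, hg, map_mul]
    have hzero : Polynomial.aeval (ζ ^ u) (Polynomial.cyclotomic (p^N) ℤ) = 0 := by
      have h9 := hη.isRoot_cyclotomic hNpos
      simpa [Polynomial.aeval_def, Polynomial.eval₂_eq_eval_map, Polynomial.map_cyclotomic,
        Polynomial.IsRoot.def] using h9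
    rw [hzero, zero_mul]
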